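/- For all n > m ≥ 1, the partial Bell polynomials satisfy the recurrence x_1 · (n−m) · B_{n,m}(x_1,…,x_{n−m+1}) = Σ_{j=1}^{n−m} C(n, j) · (m+1 − (n+1)/(j+1)) · x_{j+1} · B_{n−j,m}(x_1,…,x_{n−j−m+1}), as an identity of polynomials with rational coefficients. -/

import Mathlib

open Finset

/-- The partial Bell polynomial `B_{r,s}(x_1,…,x_l)`, `l = r−s+1`:
`Σ_{k_1+⋯+k_l=s, k_1+2k_2+⋯+lk_l=r} (r!/(k_1!⋯k_l!)) (x_1/1!)^{k_1}⋯(x_l/l!)^{k_l}`. -/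
noncomputable def partialBell (r s : ℕ) (x : ℕ → ℚ) : ℚ :=
  ∑ k ∈ (Fintype.piFinset fun _ : Fin (r - s + 1) => Finset.range (r + 1)) |>.filter
      (fun k => (∑ j, k j) = s ∧ (∑ j, (j.1 + 1) * k j) = r),
    ((r.factorial : ℚ) / ∏ j, ((k j).factorial : ℚ)) *
      ∏ j, (x (j.1 + 1) / ((j.1 + 1).factorial : ℚ)) ^ k j

/-- `ℬ_k(x_1,…,x_k,t) = Σ_{l_1+2l_2+⋯+kl_k=k} (t(t−1)⋯(t−(l_1+⋯+l_k)+1)) ·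
x_1^{l_1}⋯x_k^{l_k}/(l_1!⋯l_k!)`; `ℬ_0 = 1`. -/
noncomputable def calB (k : ℕ) (x : ℕ → ℚ) (t : ℚ) : ℚ :=
  ∑ l ∈ (Fintype.piFinset fun _ : Fin k => Finset.range (k + 1)) |>.filter
      (fun l => (∑ j, (j.1 + 1) * l j) = k),
    (∏ m ∈ Finset.range (∑ j, l j), (t - (m : ℚ))) *
      ∏ j, x (j.1 + 1) ^ l j / ((l j).factorial : ℚ)

/-- index set -/
def idxSet (M B s r : ℕ) : Finset (Fin M → ℕ) :=
  (Fintype.piFinset fun _ : Fin M => Finset.range B) |>.filter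
      (fun k => (∑ j, k j) = s ∧ (∑ j, (j.1 + 1) * k j) = r)

noncomputable def bellSum (M B s r : ℕ) (x : ℕ → ℚ) : ℚ :=
  ∑ k ∈ idxSet M B s r,
    ((r.factorial : ℚ) / ∏ j, ((k j).factorial : ℚ)) *
      ∏ j, (x (j.1 + 1) / ((j.1 + 1).factorial : ℚ)) ^ k j

lemma partialBell_eq_bellSum (r s : ℕ) (x : ℕ → ℚ) :
    partialBell r s x = bellSum (r - s + 1) (r + 1) s r x := rfl

lemma mem_idxSet {M B s r : ℕ} {k : Fin M → ℕ} :
    k ∈ idxSet M B s r ↔ (∀ i, k i < B) ∧ (∑ j, k j) = s ∧ (∑ j, (j.1 + 1) * k j) = r := by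
  simp [idxSet, Fintype.mem_piFinset, and_assoc]

lemma val_le_of_mem {M B s r : ℕ} {k : Fin M → ℕ} (hk : k ∈ idxSet M B s r) (p : Fin M) :
    k p ≤ r := by
  have h := (mem_idxSet.1 hk).2.2
  have h1 : (p.1 + 1) * k p ≤ ∑ j, (j.1 + 1) * k j :=
    Finset.single_le_sum (f := fun j : Fin M => (j.1 + 1) * k j) (fun i _ => Nat.zero_le _) (mem_univ p)
  have h2 : k p ≤ (p.1 + 1) * k p := Nat.le_mul_of_pos_left _ (by omega)
  omega

lemma weight_split {M : ℕ} (k : Fin M → ℕ) :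
    (∑ j, (j.1 + 1) * k j) = (∑ j, j.1 * k j) + ∑ j, k j := by
  rw [← Finset.sum_add_distrib]
  exact Finset.sum_congr rfl fun j _ => by ring

lemma tail_zero {M B s r : ℕ} {k : Fin M → ℕ} (hk : k ∈ idxSet M B s r)
    (q : Fin M) (hq : r - s + 1 ≤ q.1) : k q = 0 := by
  by_contra h
  obtain ⟨hb, hs, hw⟩ := mem_idxSet.1 hk
  rw [weight_split, hs] at hw
  have h1 : q.1 * k q ≤ ∑ j, j.1 * k j :=
    Finset.single_le_sum (f := fun j : Fin M => j.1 * k j) (fun i _ => Nat.zero_le _) (mem_univ q)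
  have h2 : q.1 ≤ q.1 * k q := Nat.le_mul_of_pos_right _ (by omega)
  omega

def extFn {M1 M2 : ℕ} (k : Fin M1 → ℕ) : Fin M2 → ℕ :=
  fun q => if h : q.1 < M1 then k ⟨q.1, h⟩ else 0

lemma sum_extend {M1 M2 : ℕ} (hM : M1 ≤ M2) (k : Fin M1 → ℕ) (g : ℕ → ℕ → ℕ)
    (hg : ∀ t, g t 0 = 0) :
    (∑ q : Fin M2, g q.1 ((extFn k : Fin M2 → ℕ) q)) = ∑ q : Fin M1, g q.1 (k q) := by
  have h1 : ∀ q : Fin M1, g q.1 (k q)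
      = (fun t => g t (if h : t < M1 then k ⟨t, h⟩ else 0)) q.1 := by
    intro q; simp only [q.2, dif_pos, Fin.eta]
  simp_rw [h1, extFn]
  refine Eq.trans (Fin.sum_univ_eq_sum_range (fun t => g t (if h : t < M1 then k ⟨t, h⟩ else 0)) M2) ?_
  refine Eq.trans ?_ (Fin.sum_univ_eq_sum_range (fun t => g t (if h : t < M1 then k ⟨t, h⟩ else 0)) M1).symm
  exact (Finset.sum_subset (Finset.range_subset_range.2 hM) (by
    intro t ht hnt
    rw [dif_neg (by simpa using hnt), hg])).symm

lemma prod_extend {M1 M2 : ℕ} (hM : M1 ≤ M2) (k : Fin M1 → ℕ) (g : ℕ → ℕ → ℚ)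
    (hg : ∀ t, g t 0 = 1) :
    (∏ q : Fin M2, g q.1 ((extFn k : Fin M2 → ℕ) q)) = ∏ q : Fin M1, g q.1 (k q) := by
  have h1 : ∀ q : Fin M1, g q.1 (k q)
      = (fun t => g t (if h : t < M1 then k ⟨t, h⟩ else 0)) q.1 := by
    intro q; simp only [q.2, dif_pos, Fin.eta]
  simp_rw [h1, extFn]
  refine Eq.trans (Fin.prod_univ_eq_prod_range (fun t => g t (if h : t < M1 then k ⟨t, h⟩ else 0)) M2) ?_
  refine Eq.trans ?_ (Fin.prod_univ_eq_prod_range (fun t => g t (if h : t < M1 then k ⟨t, h⟩ else 0)) M1).symm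
  exact (Finset.prod_subset (Finset.range_subset_range.2 hM) (by
    intro t ht hnt
    rw [dif_neg (by simpa using hnt), hg])).symm

lemma bellSum_congr (s r M B : ℕ) (hM : r - s + 1 ≤ M) (hB : r < B) (x : ℕ → ℚ) :
    partialBell r s x = bellSum M B s r x := by
  rw [partialBell_eq_bellSum, bellSum, bellSum]
  set M1 := r - s + 1 with hM1
  refine Finset.sum_nbij' (fun k => (extFn k : Fin M → ℕ))
    (fun l => fun q : Fin M1 => l ⟨q.1, lt_of_lt_of_le q.2 hM⟩) ?_ ?_ ?_ ?_ ?_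
  · intro k hk
    obtain ⟨hb, hs, hw⟩ := mem_idxSet.1 hk
    have e1 : (∑ j : Fin M, (extFn k : Fin M → ℕ) j) = ∑ j : Fin M1, k j :=
      sum_extend hM k (fun t v => v) (fun t => rfl)
    have e2 : (∑ j : Fin M, (j.1 + 1) * (extFn k : Fin M → ℕ) j)
        = ∑ j : Fin M1, (j.1 + 1) * k j :=
      sum_extend hM k (fun t v => (t + 1) * v) (fun t => mul_zero _)
    refine mem_idxSet.2 ⟨?_, by beta_reduce; rw [e1, hs], by beta_reduce; rw [e2, hw]⟩
    intro i
    by_cases h : i.1 < M1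
    · have := val_le_of_mem hk ⟨i.1, h⟩
      simp only [extFn, dif_pos h]
      omega
    · simp only [extFn, dif_neg h]
      omega
  · intro l hl
    obtain ⟨hb, hs, hw⟩ := mem_idxSet.1 hl
    have hext : (extFn (fun q : Fin M1 => l ⟨q.1, lt_of_lt_of_le q.2 hM⟩) : Fin M → ℕ) = l := by
      funext q
      by_cases h : q.1 < M1
      · simp only [extFn, dif_pos h]
      · simp only [extFn, dif_neg h]
        exact (tail_zero hl q (by omega)).symm
    have e1 : (∑ j : Fin M1, l ⟨j.1, lt_of_lt_of_le j.2 hM⟩) = ∑ j : Fin M, l j := by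
      have := sum_extend hM (fun q : Fin M1 => l ⟨q.1, lt_of_lt_of_le q.2 hM⟩)
        (fun t v => v) (fun t => rfl)
      rw [hext] at this; exact this.symm
    have e2 : (∑ j : Fin M1, (j.1 + 1) * l ⟨j.1, lt_of_lt_of_le j.2 hM⟩)
        = ∑ j : Fin M, (j.1 + 1) * l j := by
      have := sum_extend hM (fun q : Fin M1 => l ⟨q.1, lt_of_lt_of_le q.2 hM⟩)
        (fun t v => (t + 1) * v) (fun t => mul_zero _)
      rw [hext] at this; exact this.symm
    refine mem_idxSet.2 ⟨?_, by beta_reduce; rw [e1, hs], by beta_reduce; rw [e2, hw]⟩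
    intro i
    exact Nat.lt_succ_of_le (val_le_of_mem hl ⟨i.1, lt_of_lt_of_le i.2 hM⟩)
  · intro k hk
    funext q
    simp only [extFn, dif_pos q.2]
  · intro l hl
    funext q
    by_cases h : q.1 < M1
    · simp only [extFn, dif_pos h]
    · simp only [extFn, dif_neg h]
      exact (tail_zero hl q (by omega)).symm
  · intro k hk
    have e1 : (∏ j : Fin M, (((extFn k : Fin M → ℕ) j).factorial : ℚ))
        = ∏ j : Fin M1, ((k j).factorial : ℚ) :=
      prod_extend hM k (fun t v => (v.factorial : ℚ)) (fun t => by norm_num)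
    have e2 : (∏ j : Fin M, (x (j.1 + 1) / ((j.1 + 1).factorial : ℚ)) ^ (extFn k : Fin M → ℕ) j)
        = ∏ j : Fin M1, (x (j.1 + 1) / ((j.1 + 1).factorial : ℚ)) ^ k j :=
      prod_extend hM k (fun t v => (x (t + 1) / ((t + 1).factorial : ℚ)) ^ v) (fun t => pow_zero _)
    rw [e1, e2]

lemma comp_update {α : Type*} {M : ℕ} (k : Fin M → ℕ) (p : Fin M) (b : ℕ) (g : Fin M → ℕ → α) :
    (fun j => g j (Function.update k p b j)) = Function.update (fun j => g j (k j)) p (g p b) := by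
  funext j
  rcases eq_or_ne j p with h | h
  · subst h; simp
  · simp [Function.update_of_ne h]

lemma sum_update_add {M : ℕ} (k : Fin M → ℕ) (p : Fin M) (b : ℕ) (g : Fin M → ℕ → ℕ) :
    (∑ j, g j (Function.update k p b j)) + g p (k p) = g p b + ∑ j, g j (k j) := by
  rw [comp_update (g := g), Finset.sum_update_of_mem (Finset.mem_univ p), ← Finset.erase_eq]
  have h := Finset.add_sum_erase Finset.univ (fun j => g j (k j)) (Finset.mem_univ p)
  omega

lemma prod_update_mul {M : ℕ} (k : Fin M → ℕ) (p : Fin M) (b : ℕ) (g : Fin M → ℕ → ℚ) :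
    (∏ j, g j (Function.update k p b j)) * g p (k p) = g p b * ∏ j, g j (k j) := by
  rw [comp_update (g := g), Finset.prod_update_of_mem (Finset.mem_univ p), ← Finset.erase_eq]
  have h := Finset.mul_prod_erase Finset.univ (fun j => g j (k j)) (Finset.mem_univ p)
  rw [← h]; ring

lemma shift_sum (M B s r : ℕ) (hB : r + 1 < B) (p : Fin M) (G : (Fin M → ℕ) → ℚ)
    (hG : ∀ l ∈ idxSet M B (s + 1) (r + (p.1 + 1)), l p = 0 → G l = 0) :
    ∑ k ∈ idxSet M B s r, G (Function.update k p (k p + 1))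
      = ∑ l ∈ idxSet M B (s + 1) (r + (p.1 + 1)), G l := by
  have main : ∑ k ∈ idxSet M B s r, G (Function.update k p (k p + 1))
      = ∑ l ∈ (idxSet M B (s + 1) (r + (p.1 + 1))).filter (fun l => l p ≠ 0), G l := by
    refine Finset.sum_nbij' (fun k => Function.update k p (k p + 1))
      (fun l => Function.update l p (l p - 1)) ?_ ?_ ?_ ?_ ?_
    · intro k hk
      obtain ⟨hb, hs, hw⟩ := mem_idxSet.1 hk
      have e1 := sum_update_add k p (k p + 1) (fun j v => v)
      have e2 := sum_update_add k p (k p + 1) (fun j v => (j.1 + 1) * v)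
      have e3 : (p.1 + 1) * (k p + 1) = (p.1 + 1) * k p + (p.1 + 1) := by ring
      refine Finset.mem_filter.2 ⟨mem_idxSet.2 ⟨?_, by omega, by omega⟩, ?_⟩
      · intro i
        rcases eq_or_ne i p with h | h
        · subst h
          rw [Function.update_self]
          have := val_le_of_mem hk i
          omega
        · rw [Function.update_of_ne h]
          exact hb i
      · rw [Function.update_self]
        omega
    · intro l hl
      obtain ⟨hl', hlp⟩ := Finset.mem_filter.1 hl
      obtain ⟨hb, hs, hw⟩ := mem_idxSet.1 hl'
      have e1 := sum_update_add l p (l p - 1) (fun j v => v)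
      have e2 := sum_update_add l p (l p - 1) (fun j v => (j.1 + 1) * v)
      obtain ⟨c, hc⟩ : ∃ c, l p = c + 1 := ⟨l p - 1, by omega⟩
      have e3 : (p.1 + 1) * (l p - 1) + (p.1 + 1) = (p.1 + 1) * l p := by
        rw [hc, Nat.add_sub_cancel]; ring
      refine mem_idxSet.2 ⟨?_, by omega, by omega⟩
      intro i
      rcases eq_or_ne i p with h | h
      · subst h
        rw [Function.update_self]
        have := hb i
        omega
      · rw [Function.update_of_ne h]
        exact hb i
    · intro k hk
      funext i
      rcases eq_or_ne i p with h | h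
      · subst h; simp
      · simp [Function.update_of_ne h]
    · intro l hl
      have hlp := (Finset.mem_filter.1 hl).2
      funext i
      rcases eq_or_ne i p with h | h
      · subst h
        simp only [Function.update_self]
        omega
      · simp [Function.update_of_ne h]
    · intro k hk
      rfl
  rw [main]
  exact Finset.sum_filter_of_ne (fun l hl h => by
    by_contra hp
    exact h (hG l hl (by omega)))

noncomputable def bellF (M n : ℕ) (x : ℕ → ℚ) (l : Fin M → ℕ) : ℚ :=
  ((n.factorial : ℚ) / ∏ j, ((l j).factorial : ℚ)) *
      ∏ j, (x (j.1 + 1) / ((j.1 + 1).factorial : ℚ)) ^ l j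

def eAt {M : ℕ} (l : Fin M → ℕ) (t : ℕ) : ℕ := if h : t < M then l ⟨t, h⟩ else 0

lemma eAt_lt {M : ℕ} (l : Fin M → ℕ) {t : ℕ} (h : t < M) : eAt l t = l ⟨t, h⟩ := dif_pos h

lemma eAt_update_self {M : ℕ} (k : Fin M → ℕ) (t : ℕ) (ht : t < M) :
    eAt (Function.update k ⟨t, ht⟩ (k ⟨t, ht⟩ + 1)) t = k ⟨t, ht⟩ + 1 := by
  rw [eAt_lt _ ht, Function.update_self]

lemma prod_pow_update {M : ℕ} (k : Fin M → ℕ) (p : Fin M) (base : Fin M → ℚ) :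
    (∏ j, base j ^ (Function.update k p (k p + 1) j)) = base p * ∏ j, base j ^ k j := by
  rw [comp_update (g := fun j v => base j ^ v), Finset.prod_update_of_mem (Finset.mem_univ p),
    ← Finset.erase_eq, ← Finset.mul_prod_erase Finset.univ (fun j => base j ^ k j)
      (Finset.mem_univ p)]
  ring

lemma prod_fact_update {M : ℕ} (k : Fin M → ℕ) (p : Fin M) :
    (∏ j, ((Function.update k p (k p + 1) j).factorial : ℚ))
      = ((k p : ℚ) + 1) * ∏ j, ((k j).factorial : ℚ) := by
  rw [comp_update (g := fun j v => ((v.factorial : ℚ))),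
    Finset.prod_update_of_mem (Finset.mem_univ p), ← Finset.erase_eq,
    ← Finset.mul_prod_erase Finset.univ (fun j => ((k j).factorial : ℚ)) (Finset.mem_univ p)]
  have h : ((k p + 1).factorial : ℚ) = ((k p : ℚ) + 1) * ((k p).factorial : ℚ) := by
    rw [Nat.factorial_succ]; push_cast; ring
  rw [h]; ring

lemma term_factor {M : ℕ} (x : ℕ → ℚ) (n r : ℕ) (k : Fin M → ℕ) (t : ℕ) (ht : t < M) :
    x (t + 1) * (((r.factorial : ℚ) / ∏ j, ((k j).factorial : ℚ)) *
        ∏ j, (x (j.1 + 1) / ((j.1 + 1).factorial : ℚ)) ^ k j)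
      = ((t + 1).factorial : ℚ) * ((k ⟨t, ht⟩ : ℚ) + 1) * ((r.factorial : ℚ) / (n.factorial : ℚ)) *
        bellF M n x (Function.update k ⟨t, ht⟩ (k ⟨t, ht⟩ + 1)) := by
  rw [bellF, prod_fact_update, prod_pow_update]
  have h1 : (∏ j, ((k j).factorial : ℚ)) ≠ 0 :=
    Finset.prod_ne_zero_iff.2 fun j _ => Nat.cast_ne_zero.2 (Nat.factorial_ne_zero _)
  have h2 : (n.factorial : ℚ) ≠ 0 := Nat.cast_ne_zero.2 (Nat.factorial_ne_zero _)
  have h3 : ((k ⟨t, ht⟩ : ℚ) + 1) ≠ 0 := by positivity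
  have h4 : (((⟨t, ht⟩ : Fin M).1 + 1).factorial : ℚ) ≠ 0 :=
    Nat.cast_ne_zero.2 (Nat.factorial_ne_zero _)
  have h5 : ((⟨t, ht⟩ : Fin M).1 : ℕ) = t := rfl
  rw [h5] at h4 ⊢
  field_simp

lemma shift_sum' (M B s r r' : ℕ) (hB : r + 1 < B) (p : Fin M) (hr : r + (p.1 + 1) = r')
    (G : (Fin M → ℕ) → ℚ) (hG : ∀ l ∈ idxSet M B (s + 1) r', l p = 0 → G l = 0) :
    ∑ k ∈ idxSet M B s r, G (Function.update k p (k p + 1))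
      = ∑ l ∈ idxSet M B (s + 1) r', G l := by
  subst hr
  exact shift_sum M B s r hB p G hG

lemma sum_eAt_cast {M : ℕ} (l : Fin M → ℕ) :
    ∑ t ∈ Finset.range M, (eAt l t : ℚ) = ((∑ q : Fin M, l q : ℕ) : ℚ) := by
  rw [← Fin.sum_univ_eq_sum_range (fun t => (eAt l t : ℚ)) M]
  push_cast
  exact Finset.sum_congr rfl fun q _ => by rw [eAt_lt l q.2]

lemma sum_eAt_weight {M : ℕ} (l : Fin M → ℕ) :
    ∑ t ∈ Finset.range M, ((t : ℚ) + 1) * (eAt l t : ℚ)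
      = ((∑ q : Fin M, (q.1 + 1) * l q : ℕ) : ℚ) := by
  rw [← Fin.sum_univ_eq_sum_range (fun t => ((t : ℚ) + 1) * (eAt l t : ℚ)) M]
  push_cast
  exact Finset.sum_congr rfl fun q _ => by rw [eAt_lt l q.2]


/-- For `n > m ≥ 1`:
`x_1·(n−m)·B_{n,m}(x_1,…,x_{n−m+1})
  = Σ_{j=1}^{n−m} C(n,j)·(m+1−(n+1)/(j+1))·x_{j+1}·B_{n−j,m}(x_1,…,x_{n−j−m+1})`. -/
theorem stmt13 (n m : ℕ) (hm : 1 ≤ m) (hmn : m < n) (x : ℕ → ℚ) :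
    x 1 * ((n : ℚ) - (m : ℚ)) * partialBell n m x =
      ∑ j ∈ Finset.Icc 1 (n - m),
        (n.choose j : ℚ) * ((m : ℚ) + 1 - ((n : ℚ) + 1) / ((j : ℚ) + 1)) * x (j + 1) *
          partialBell (n - j) m x := by
  have hnm1 : 1 ≤ n - m := by omega
  set M := n - m + 1 with hMdef
  set B := n + 2 with hBdef
  have h0M : 0 < M := by omega
  -- the common target index set
  set S := idxSet M B (m + 1) (n + 1) with hSdef
  -- LHS rewriting
  have hLHS : x 1 * ((n : ℚ) - (m : ℚ)) * partialBell n m x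
      = ∑ l ∈ S, ((n : ℚ) - (m : ℚ)) * (eAt l 0 : ℚ) * bellF M n x l := by
    rw [bellSum_congr m n M B (by omega) (by omega) x, bellSum, Finset.mul_sum]
    have step : ∀ k ∈ idxSet M B m n,
        x 1 * ((n : ℚ) - (m : ℚ)) *
            (((n.factorial : ℚ) / ∏ j, ((k j).factorial : ℚ)) *
              ∏ j, (x (j.1 + 1) / ((j.1 + 1).factorial : ℚ)) ^ k j)
          = (fun l => ((n : ℚ) - (m : ℚ)) * (eAt l 0 : ℚ) * bellF M n x l)
              (Function.update k ⟨0, h0M⟩ (k ⟨0, h0M⟩ + 1)) := by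
      intro k hk
      have tf := term_factor x n n k 0 h0M
      have hfact1 : ((0 + 1).factorial : ℚ) = 1 := by norm_num
      have hdiv : ((n.factorial : ℚ) / (n.factorial : ℚ)) = 1 :=
        div_self (Nat.cast_ne_zero.2 (Nat.factorial_ne_zero _))
      dsimp only
      rw [eAt_update_self k 0 h0M]
      push_cast
      rw [show x 1 * ((n : ℚ) - (m : ℚ)) *
            (((n.factorial : ℚ) / ∏ j, ((k j).factorial : ℚ)) *
              ∏ j, (x (j.1 + 1) / ((j.1 + 1).factorial : ℚ)) ^ k j)
          = ((n : ℚ) - (m : ℚ)) * (x (0 + 1) *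
            (((n.factorial : ℚ) / ∏ j, ((k j).factorial : ℚ)) *
              ∏ j, (x (j.1 + 1) / ((j.1 + 1).factorial : ℚ)) ^ k j)) from by norm_num; ring]
      rw [tf, hfact1, hdiv]
      ring
    rw [Finset.sum_congr rfl step]
    exact shift_sum' M B m n (n + 1) (by omega) ⟨0, h0M⟩ rfl
      (fun l => ((n : ℚ) - (m : ℚ)) * (eAt l 0 : ℚ) * bellF M n x l)
      (fun l hl h0 => by
        simp only [eAt_lt l h0M, h0, Nat.cast_zero, mul_zero, zero_mul])
  -- RHS rewriting
  have hRHS : ∀ j ∈ Finset.Icc 1 (n - m),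
      (n.choose j : ℚ) * ((m : ℚ) + 1 - ((n : ℚ) + 1) / ((j : ℚ) + 1)) * x (j + 1) *
          partialBell (n - j) m x
        = ∑ l ∈ S, (((m : ℚ) + 1) * ((j : ℚ) + 1) - ((n : ℚ) + 1)) * (eAt l j : ℚ) *
            bellF M n x l := by
    intro j hj
    obtain ⟨hj1, hj2⟩ := Finset.mem_Icc.1 hj
    have hjM : j < M := by omega
    have hjn : j ≤ n := by omega
    have hchoose : (n.choose j : ℚ) * (j.factorial : ℚ) * ((n - j).factorial : ℚ)
        = (n.factorial : ℚ) := by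
      exact_mod_cast congrArg (Nat.cast : ℕ → ℚ)
        (Nat.choose_mul_factorial_mul_factorial hjn)
    have hjfact : ((j + 1).factorial : ℚ) = ((j : ℚ) + 1) * (j.factorial : ℚ) := by
      rw [Nat.factorial_succ]; push_cast; ring
    have hj0 : ((j : ℚ) + 1) ≠ 0 := by positivity
    have hn0 : (n.factorial : ℚ) ≠ 0 := Nat.cast_ne_zero.2 (Nat.factorial_ne_zero _)
    have hcoef : (n.choose j : ℚ) * ((m : ℚ) + 1 - ((n : ℚ) + 1) / ((j : ℚ) + 1)) *
          (((j + 1).factorial : ℚ) * (((n - j).factorial : ℚ) / (n.factorial : ℚ)))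
        = ((m : ℚ) + 1) * ((j : ℚ) + 1) - ((n : ℚ) + 1) := by
      rw [hjfact]
      have expand : ((m : ℚ) + 1 - ((n : ℚ) + 1) / ((j : ℚ) + 1)) * ((j : ℚ) + 1)
          = ((m : ℚ) + 1) * ((j : ℚ) + 1) - ((n : ℚ) + 1) := by
        rw [sub_mul, div_mul_cancel₀ _ hj0]
      have h6 : (n.choose j : ℚ) * ((j.factorial : ℚ) * (((n - j).factorial : ℚ) / (n.factorial : ℚ))) = 1 := by
        rw [show (n.choose j : ℚ) * ((j.factorial : ℚ) * (((n - j).factorial : ℚ) / (n.factorial : ℚ)))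
            = ((n.choose j : ℚ) * (j.factorial : ℚ) * ((n - j).factorial : ℚ)) / (n.factorial : ℚ) from by ring,
          hchoose]
        exact div_self hn0
      calc (n.choose j : ℚ) * ((m : ℚ) + 1 - ((n : ℚ) + 1) / ((j : ℚ) + 1)) *
            ((((j : ℚ) + 1) * (j.factorial : ℚ)) * (((n - j).factorial : ℚ) / (n.factorial : ℚ)))
          = ((n.choose j : ℚ) * ((j.factorial : ℚ) * (((n - j).factorial : ℚ) / (n.factorial : ℚ)))) *
            (((m : ℚ) + 1 - ((n : ℚ) + 1) / ((j : ℚ) + 1)) * ((j : ℚ) + 1)) := by ring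
        _ = ((m : ℚ) + 1) * ((j : ℚ) + 1) - ((n : ℚ) + 1) := by rw [h6, expand, one_mul]
    rw [bellSum_congr m (n - j) M B (by omega) (by omega) x, bellSum, Finset.mul_sum]
    have step : ∀ k ∈ idxSet M B m (n - j),
        (n.choose j : ℚ) * ((m : ℚ) + 1 - ((n : ℚ) + 1) / ((j : ℚ) + 1)) * x (j + 1) *
            ((((n - j).factorial : ℚ) / ∏ q, ((k q).factorial : ℚ)) *
              ∏ q, (x (q.1 + 1) / ((q.1 + 1).factorial : ℚ)) ^ k q)
          = (fun l => (((m : ℚ) + 1) * ((j : ℚ) + 1) - ((n : ℚ) + 1)) * (eAt l j : ℚ) *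
              bellF M n x l) (Function.update k ⟨j, hjM⟩ (k ⟨j, hjM⟩ + 1)) := by
      intro k hk
      have tf := term_factor x n (n - j) k j hjM
      dsimp only
      rw [eAt_update_self k j hjM]
      push_cast
      rw [show (n.choose j : ℚ) * ((m : ℚ) + 1 - ((n : ℚ) + 1) / ((j : ℚ) + 1)) * x (j + 1) *
            ((((n - j).factorial : ℚ) / ∏ q, ((k q).factorial : ℚ)) *
              ∏ q, (x (q.1 + 1) / ((q.1 + 1).factorial : ℚ)) ^ k q)
          = (n.choose j : ℚ) * ((m : ℚ) + 1 - ((n : ℚ) + 1) / ((j : ℚ) + 1)) * (x (j + 1) *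
            ((((n - j).factorial : ℚ) / ∏ q, ((k q).factorial : ℚ)) *
              ∏ q, (x (q.1 + 1) / ((q.1 + 1).factorial : ℚ)) ^ k q)) from by ring]
      rw [tf]
      linear_combination ((k ⟨j, hjM⟩ : ℚ) + 1) *
        (bellF M n x (Function.update k ⟨j, hjM⟩ (k ⟨j, hjM⟩ + 1))) * hcoef
    rw [Finset.sum_congr rfl step]
    exact shift_sum' M B m (n - j) (n + 1) (by omega) ⟨j, hjM⟩ (by simp; omega)
      (fun l => (((m : ℚ) + 1) * ((j : ℚ) + 1) - ((n : ℚ) + 1)) * (eAt l j : ℚ) * bellF M n x l)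
      (fun l hl h0 => by
        simp only [eAt_lt l hjM, h0, Nat.cast_zero, mul_zero, zero_mul])
  rw [hLHS, Finset.sum_congr rfl hRHS, Finset.sum_comm]
  -- pointwise identity
  refine Finset.sum_congr rfl fun l hl => ?_
  obtain ⟨hb, hs, hw⟩ := mem_idxSet.1 hl
  have hs' : ∑ t ∈ Finset.range M, (eAt l t : ℚ) = (m : ℚ) + 1 := by
    rw [sum_eAt_cast, hs]; push_cast; ring
  have hw' : ∑ t ∈ Finset.range M, ((t : ℚ) + 1) * (eAt l t : ℚ) = (n : ℚ) + 1 := by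
    rw [sum_eAt_weight, hw]; push_cast; ring
  have hrange : Finset.range M = insert 0 (Finset.Icc 1 (n - m)) := by
    ext t
    simp only [Finset.mem_range, Finset.mem_insert, Finset.mem_Icc]
    omega
  rw [hrange, Finset.sum_insert (by simp)] at hs' hw'
  push_cast at hs' hw'
  have hsplit : ∑ j ∈ Finset.Icc 1 (n - m),
        (((m : ℚ) + 1) * ((j : ℚ) + 1) - ((n : ℚ) + 1)) * (eAt l j : ℚ)
      = ((m : ℚ) + 1) * (∑ j ∈ Finset.Icc 1 (n - m), ((j : ℚ) + 1) * (eAt l j : ℚ))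
          - ((n : ℚ) + 1) * (∑ j ∈ Finset.Icc 1 (n - m), (eAt l j : ℚ)) := by
    rw [Finset.mul_sum, Finset.mul_sum, ← Finset.sum_sub_distrib]
    exact Finset.sum_congr rfl fun t _ => by ring
  have hscal : ∑ j ∈ Finset.Icc 1 (n - m),
        (((m : ℚ) + 1) * ((j : ℚ) + 1) - ((n : ℚ) + 1)) * (eAt l j : ℚ)
      = ((n : ℚ) - (m : ℚ)) * (eAt l 0 : ℚ) := by
    rw [hsplit]
    linear_combination ((m : ℚ) + 1) * hw' - ((n : ℚ) + 1) * hs'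
  rw [← Finset.sum_mul, hscal]
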